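/- Let J be a Hermitian complex structure on the finite-dimensional inner product space V and let Θ ∈ S²₊(V*)⊗S²(V*). Define the metric g_Θ(u)(x,y) := ⟨x,y⟩ + Θ(x,y,u,u) for u,x,y ∈ V, and the Kaehler 2-form Ω(u)(x,y) := g_Θ(u)(x,Jy). Then the exterior derivative of Ω, given in the constant frame by dΩ(u)(x,y,z) = D_xΩ(·)(y,z)|_u − D_yΩ(·)(x,z)|_u + D_zΩ(·)(x,y)|_u (where D_v denotes the directional derivative at u in direction v), satisfies dΩ(u)(x,y,z) = 2(K_JΘ)(x,y,z;u) for all u,x,y,z. In particular, dΩ vanishes identically if and only if K_JΘ = 0. -/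

import Mathlib

open scoped RealInnerProductSpace

lemma fderiv_quad {V : Type*} [NormedAddCommGroup V] [InnerProductSpace ℝ V]
    [FiniteDimensional ℝ V] (L : V →ₗ[ℝ] V →ₗ[ℝ] ℝ) (c : ℝ) (u x : V) :
    fderiv ℝ (fun v => c + L v v) u x = L x u + L u x := by
  let L' : V →ₗ[ℝ] (V →L[ℝ] ℝ) :=
    { toFun := fun v => (L v).toContinuousLinearMap,
      map_add' := by intro a b; ext w; simp,
      map_smul' := by intro a b; ext w; simp }
  let B : V →L[ℝ] V →L[ℝ] ℝ := L'.toContinuousLinearMap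
  have hb : IsBoundedBilinearMap ℝ (fun p : V × V => B p.1 p.2) :=
    B.isBoundedBilinearMap
  have hdiag : HasFDerivAt (fun v : V => (v, v))
      ((ContinuousLinearMap.id ℝ V).prod (ContinuousLinearMap.id ℝ V)) u :=
    HasFDerivAt.prodMk (hasFDerivAt_id u) (hasFDerivAt_id u)
  have h : HasFDerivAt ((fun p : V × V => B p.1 p.2) ∘ (fun v : V => (v, v)))
      ((hb.deriv (u, u)).comp
        ((ContinuousLinearMap.id ℝ V).prod (ContinuousLinearMap.id ℝ V))) u :=
    HasFDerivAt.comp u (hb.hasFDerivAt (u, u)) hdiag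
  have h2 : HasFDerivAt (fun v => c + L v v)
      ((hb.deriv (u, u)).comp
        ((ContinuousLinearMap.id ℝ V).prod (ContinuousLinearMap.id ℝ V))) u := by
    have he : (fun v : V => c + L v v)
        = fun v => c + ((fun p : V × V => B p.1 p.2) ∘ (fun v : V => (v, v))) v := rfl
    rw [he]
    exact h.const_add c
  rw [h2.fderiv]
  simp only [ContinuousLinearMap.coe_comp', Function.comp_apply,
    ContinuousLinearMap.prod_apply, ContinuousLinearMap.coe_id', id_eq,
    IsBoundedBilinearMap.deriv_apply, B, L', LinearMap.coe_toContinuousLinearMap,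
    LinearMap.coe_mk, AddHom.coe_mk]
  simp only [LinearMap.coe_toContinuousLinearMap', LinearMap.coe_mk, AddHom.coe_mk]
  exact add_comm _ _

/-- For `Θ ∈ S²₊(V*)⊗S²(V*)` and the metric `g_Θ(u)(x,y) = ⟨x,y⟩ + Θ(x,y,u,u)` with
Kaehler form `Ω(u)(x,y) = g_Θ(u)(x,Jy)`, the exterior derivative of `Ω` in the constant
frame satisfies `dΩ(u)(x,y,z) = 2(K_JΘ)(x,y,z;u)`; in particular `dΩ ≡ 0` iff
`K_JΘ = 0`. -/
theorem dOmega_eq_two_K_J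
    {V : Type*} [NormedAddCommGroup V] [InnerProductSpace ℝ V] [FiniteDimensional ℝ V]
    {n : ℕ} (hdim : Module.finrank ℝ V = 2 * n) (hm : 4 ≤ Module.finrank ℝ V)
    (J : V →ₗ[ℝ] V)
    (hJ2 : ∀ x : V, J (J x) = -x)
    (hJi : ∀ x y : V, ⟪J x, J y⟫ = ⟪x, y⟫)
    (Θ : V →ₗ[ℝ] V →ₗ[ℝ] V →ₗ[ℝ] V →ₗ[ℝ] ℝ)
    (hs1 : ∀ x y z w : V, Θ x y z w = Θ y x z w)
    (hs2 : ∀ x y z w : V, Θ x y z w = Θ x y w z)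
    (hsJ : ∀ x y z w : V, Θ (J x) (J y) z w = Θ x y z w)
    (Ω : V → V → V → ℝ)
    (hΩ : ∀ u x y : V, Ω u x y = ⟪x, J y⟫ + Θ x (J y) u u) :
    (∀ u x y z : V,
      fderiv ℝ (fun v => Ω v y z) u x - fderiv ℝ (fun v => Ω v x z) u y
        + fderiv ℝ (fun v => Ω v x y) u z
      = 2 * (Θ x (J y) z u + Θ y (J z) x u + Θ z (J x) y u)) ∧
    ((∀ u x y z : V,
        fderiv ℝ (fun v => Ω v y z) u x - fderiv ℝ (fun v => Ω v x z) u y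
          + fderiv ℝ (fun v => Ω v x y) u z = 0)
      ↔ (∀ x y z w : V, Θ x (J y) z w + Θ y (J z) x w + Θ z (J x) y w = 0)) := by
  have key : ∀ u x y z : V,
      fderiv ℝ (fun v => Ω v y z) u x - fderiv ℝ (fun v => Ω v x z) u y
        + fderiv ℝ (fun v => Ω v x y) u z
      = 2 * (Θ x (J y) z u + Θ y (J z) x u + Θ z (J x) y u) := by
    intro u x y z
    have hf : ∀ a b : V, (fun v => Ω v a b) = fun v => ⟪a, J b⟫ + Θ a (J b) v v :=
      fun a b => funext fun v => hΩ v a b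
    rw [hf y z, hf x z, hf x y, fderiv_quad (Θ y (J z)), fderiv_quad (Θ x (J z)),
      fderiv_quad (Θ x (J y))]
    have hneg : Θ x (J z) y u = -(Θ z (J x) y u) := by
      rw [← hsJ z (J x) y u, hJ2 x]
      simp only [map_neg, LinearMap.neg_apply]
      rw [hs1 (J z) x y u]
      ring
    have e1 : Θ y (J z) u x = Θ y (J z) x u := hs2 y (J z) u x
    have e2 : Θ x (J z) u y = Θ x (J z) y u := hs2 x (J z) u y
    have e3 : Θ x (J y) u z = Θ x (J y) z u := hs2 x (J y) u z
    rw [e1, e2, e3, hneg]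
    ring
  refine ⟨key, ?_, fun h u x y z => by rw [key u x y z, h x y z u]; ring⟩
  intro h x y z w
  have := h w x y z
  rw [key w x y z] at this
  linarith
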